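/- arXiv:hep-th/9208007 — 2 statements merged into one kernel-verified Lean document; each statement's English description precedes it below -/
import Mathlib

section
/- If β : A → Γ_B transforms under a gauge transformation γ as β^γ = γ*β*γ⁻¹ + γ*d(γ⁻¹), then the operator ∇ = d + β* on sections satisfies the covariance property ∇^γ(σ^γ) = γ*(∇σ) for every section σ, where ∇^γ = d + β^γ* and σ^γ = γ*σ. -/
/- STATEMENT 3: If β : A → Γ_B transforms under a gauge transformation γ as
β^γ = γ*β*γ⁻¹ + γ*d(γ⁻¹), then ∇ = d + β* satisfies ∇^γ(σ^γ) = γ*(nablaSigma) for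
every section σ, where ∇^γ = d + β^γ* and σ^γ = γ*σ.
Model: the differential calculus (Γ_B, d) on B sits inside a differential
algebra Ω via an algebra inclusion ι : B → Ω with differential d : Ω → Ω
obeying the Leibniz rule on B. -/

open TensorProduct

/-- Convolution of two maps A → Ω. -/
noncomputable def convAA {k A Ω : Type*} [Field k] [Ring A] [HopfAlgebra k A]
    [Ring Ω] [Algebra k Ω] (f g : A →ₗ[k] Ω) : A →ₗ[k] Ω :=
  (LinearMap.mul' k Ω) ∘ₗ (TensorProduct.map f g) ∘ₗ Coalgebra.comul

/-- Convolution of f : A → Ω with g : V → Ω using a left coaction ρL on V. -/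
noncomputable def convAV {k A V Ω : Type*} [Field k] [Ring A] [HopfAlgebra k A]
    [AddCommGroup V] [Module k V] [Ring Ω] [Algebra k Ω]
    (ρL : V →ₗ[k] A ⊗[k] V) (f : A →ₗ[k] Ω) (g : V →ₗ[k] Ω) : V →ₗ[k] Ω :=
  (LinearMap.mul' k Ω) ∘ₗ (TensorProduct.map f g) ∘ₗ ρL

section Helpers
variable {k A V Ω : Type*} [Field k] [Ring A] [HopfAlgebra k A]
  [AddCommGroup V] [Module k V] [Ring Ω] [Algebra k Ω]

lemma mul_map_assoc_core (f g : A →ₗ[k] Ω) (h : V →ₗ[k] Ω) :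
    (LinearMap.mul' k Ω) ∘ₗ TensorProduct.map f ((LinearMap.mul' k Ω) ∘ₗ TensorProduct.map g h)
      ∘ₗ (TensorProduct.assoc k A A V).toLinearMap
    = (LinearMap.mul' k Ω) ∘ₗ TensorProduct.map ((LinearMap.mul' k Ω) ∘ₗ TensorProduct.map f g) h := by
  ext a b v; simp [mul_assoc]

lemma convAV_assoc (ρL : V →ₗ[k] A ⊗[k] V)
    (hcoassoc : (TensorProduct.assoc k A A V).symm.toLinearMap ∘ₗ (ρL.lTensor A) ∘ₗ ρL =
        ((Coalgebra.comul (R := k) (A := A)).rTensor V) ∘ₗ ρL)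
    (f g : A →ₗ[k] Ω) (h : V →ₗ[k] Ω) :
    convAV ρL f (convAV ρL g h) = convAV ρL (convAA f g) h := by
  have hco : (ρL.lTensor A) ∘ₗ ρL =
      (TensorProduct.assoc k A A V).toLinearMap ∘ₗ ((Coalgebra.comul (R := k) (A := A)).rTensor V) ∘ₗ ρL := by
    rw [← hcoassoc]
    ext v
    simp
  unfold convAV convAA
  have h1 : TensorProduct.map f ((LinearMap.mul' k Ω) ∘ₗ TensorProduct.map g h ∘ₗ ρL)
      = (TensorProduct.map f ((LinearMap.mul' k Ω) ∘ₗ TensorProduct.map g h)) ∘ₗ ρL.lTensor A := by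
    rw [LinearMap.lTensor, ← TensorProduct.map_comp]
    simp [LinearMap.comp_assoc]
  rw [h1]
  have h2 : TensorProduct.map ((LinearMap.mul' k Ω) ∘ₗ TensorProduct.map f g ∘ₗ Coalgebra.comul) h
      = (TensorProduct.map ((LinearMap.mul' k Ω) ∘ₗ TensorProduct.map f g) h)
        ∘ₗ (Coalgebra.comul (R := k) (A := A)).rTensor V := by
    rw [LinearMap.rTensor, ← TensorProduct.map_comp]
    simp [LinearMap.comp_assoc]
  rw [h2]
  have core := mul_map_assoc_core (k := k) f g h
  simp only [LinearMap.comp_assoc]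
  rw [hco]
  rw [← LinearMap.comp_assoc] at core
  simp only [← LinearMap.comp_assoc]
  rw [core]

end Helpers

section Helpers2
variable {k A V Ω : Type*} [Field k] [Ring A] [HopfAlgebra k A]
  [AddCommGroup V] [Module k V] [Ring Ω] [Algebra k Ω]

lemma convAA_assoc (f g h : A →ₗ[k] Ω) :
    convAA f (convAA g h) = convAA (convAA f g) h := by
  have hco : (TensorProduct.assoc k A A A).symm.toLinearMap ∘ₗ
        ((Coalgebra.comul (R := k) (A := A)).lTensor A) ∘ₗ Coalgebra.comul =
      ((Coalgebra.comul (R := k) (A := A)).rTensor A) ∘ₗ Coalgebra.comul := by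
    rw [← Coalgebra.coassoc]
    ext a; simp
  exact convAV_assoc (V := A) (Coalgebra.comul) hco f g h

/-- unit map η∘ε : A → Ω -/
noncomputable def unitE (k A Ω : Type*) [Field k] [Ring A] [HopfAlgebra k A]
    [Ring Ω] [Algebra k Ω] : A →ₗ[k] Ω :=
  (Algebra.linearMap k Ω) ∘ₗ Coalgebra.counit

lemma convAA_one_mul (f : A →ₗ[k] Ω) : convAA (unitE k A Ω) f = f := by
  unfold convAA unitE
  have h1 : TensorProduct.map ((Algebra.linearMap k Ω) ∘ₗ (Coalgebra.counit (R := k) (A := A))) f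
      = (TensorProduct.map (Algebra.linearMap k Ω) f) ∘ₗ
        (Coalgebra.counit (R := k) (A := A)).rTensor A := by
    rw [LinearMap.rTensor, ← TensorProduct.map_comp]; simp
  rw [h1, LinearMap.comp_assoc, Coalgebra.rTensor_counit_comp_comul]
  ext a
  simp [Algebra.smul_def]

lemma convAA_mul_one (f : A →ₗ[k] Ω) : convAA f (unitE k A Ω) = f := by
  unfold convAA unitE
  have h1 : TensorProduct.map f ((Algebra.linearMap k Ω) ∘ₗ (Coalgebra.counit (R := k) (A := A)))
      = (TensorProduct.map f (Algebra.linearMap k Ω)) ∘ₗ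
        (Coalgebra.counit (R := k) (A := A)).lTensor A := by
    rw [LinearMap.lTensor, ← TensorProduct.map_comp]; simp
  rw [h1, LinearMap.comp_assoc, Coalgebra.lTensor_counit_comp_comul]
  ext a
  simp [Algebra.smul_def, Algebra.commutes]

lemma convAV_add_left (ρL : V →ₗ[k] A ⊗[k] V) (f g : A →ₗ[k] Ω) (h : V →ₗ[k] Ω) :
    convAV ρL (f + g) h = convAV ρL f h + convAV ρL g h := by
  unfold convAV
  rw [TensorProduct.map_add_left]
  simp [LinearMap.add_comp, LinearMap.comp_add]

lemma convAV_add_right (ρL : V →ₗ[k] A ⊗[k] V) (f : A →ₗ[k] Ω) (g h : V →ₗ[k] Ω) :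
    convAV ρL f (g + h) = convAV ρL f g + convAV ρL f h := by
  unfold convAV
  rw [TensorProduct.map_add_right]
  simp [LinearMap.add_comp, LinearMap.comp_add]

lemma convAA_add_left (f g h : A →ₗ[k] Ω) :
    convAA (f + g) h = convAA f h + convAA g h :=
  convAV_add_left (V := A) Coalgebra.comul f g h

lemma convAA_add_right (f g h : A →ₗ[k] Ω) :
    convAA f (g + h) = convAA f g + convAA f h :=
  convAV_add_right (V := A) Coalgebra.comul f g h

lemma convAV_neg_left (ρL : V →ₗ[k] A ⊗[k] V) (f : A →ₗ[k] Ω) (h : V →ₗ[k] Ω) :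
    convAV ρL (-f) h = -convAV ρL f h := by
  unfold convAV
  have : TensorProduct.map (-f) h = -TensorProduct.map f h := by
    ext a v; simp [TensorProduct.neg_tmul]
  rw [this]; ext v; simp

lemma convAA_neg_right (f g : A →ₗ[k] Ω) :
    convAA f (-g) = -convAA f g := by
  unfold convAA
  have : TensorProduct.map f (-g) = -TensorProduct.map f g := by
    ext a v; simp [TensorProduct.tmul_neg]
  rw [this]; ext v; simp

end Helpers2

section Helpers3
variable {k A B V Ω : Type*} [Field k] [Ring A] [HopfAlgebra k A]
  [Ring B] [Algebra k B] [AddCommGroup V] [Module k V] [Ring Ω] [Algebra k Ω]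

lemma convAA_eq_convAV {k A Ω : Type*} [Field k] [Ring A] [HopfAlgebra k A]
    [Ring Ω] [Algebra k Ω] (f g : A →ₗ[k] Ω) :
    convAA f g = convAV Coalgebra.comul f g := rfl

lemma iota_conv (ι : B →ₐ[k] Ω) (ρ : V →ₗ[k] A ⊗[k] V) (f : A →ₗ[k] B) (g : V →ₗ[k] B) :
    convAV ρ (ι.toLinearMap ∘ₗ f) (ι.toLinearMap ∘ₗ g) =
      ι.toLinearMap ∘ₗ ((LinearMap.mul' k B) ∘ₗ (TensorProduct.map f g) ∘ₗ ρ) := by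
  unfold convAV
  have h1 : (LinearMap.mul' k Ω) ∘ₗ TensorProduct.map (ι.toLinearMap ∘ₗ f) (ι.toLinearMap ∘ₗ g)
      = (ι.toLinearMap ∘ₗ (LinearMap.mul' k B)) ∘ₗ TensorProduct.map f g := by
    ext a v; simp
  rw [← LinearMap.comp_assoc, h1]
  simp only [LinearMap.comp_assoc]

lemma leibniz_conv (ι : B →ₐ[k] Ω) (d : Ω →ₗ[k] Ω)
    (hLeib : ∀ b c : B, d (ι b * ι c) = d (ι b) * ι c + ι b * d (ι c))
    (ρ : V →ₗ[k] A ⊗[k] V) (f : A →ₗ[k] B) (g : V →ₗ[k] B) :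
    d ∘ₗ convAV ρ (ι.toLinearMap ∘ₗ f) (ι.toLinearMap ∘ₗ g) =
      convAV ρ (d ∘ₗ ι.toLinearMap ∘ₗ f) (ι.toLinearMap ∘ₗ g) +
      convAV ρ (ι.toLinearMap ∘ₗ f) (d ∘ₗ ι.toLinearMap ∘ₗ g) := by
  unfold convAV
  have core : d ∘ₗ ((LinearMap.mul' k Ω) ∘ₗ
        TensorProduct.map (ι.toLinearMap ∘ₗ f) (ι.toLinearMap ∘ₗ g))
      = (LinearMap.mul' k Ω) ∘ₗ TensorProduct.map (d ∘ₗ ι.toLinearMap ∘ₗ f) (ι.toLinearMap ∘ₗ g)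
        + (LinearMap.mul' k Ω) ∘ₗ TensorProduct.map (ι.toLinearMap ∘ₗ f) (d ∘ₗ ι.toLinearMap ∘ₗ g) := by
    ext a v; simp [hLeib]
  calc d ∘ₗ ((LinearMap.mul' k Ω) ∘ₗ (TensorProduct.map (ι.toLinearMap ∘ₗ f) (ι.toLinearMap ∘ₗ g)) ∘ₗ ρ)
      = (d ∘ₗ ((LinearMap.mul' k Ω) ∘ₗ TensorProduct.map (ι.toLinearMap ∘ₗ f) (ι.toLinearMap ∘ₗ g))) ∘ₗ ρ := by
        simp only [LinearMap.comp_assoc]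
    _ = _ := by rw [core, LinearMap.add_comp]; simp only [LinearMap.comp_assoc]

lemma d_unitE (ι : B →ₐ[k] Ω) (d : Ω →ₗ[k] Ω)
    (hLeib : ∀ b c : B, d (ι b * ι c) = d (ι b) * ι c + ι b * d (ι c)) :
    d ∘ₗ unitE k A Ω = 0 := by
  have hd1 : d 1 = 0 := by
    have := hLeib 1 1
    simp only [map_one, one_mul, mul_one] at this
    -- d 1 = d 1 + d 1
    have h2 : d 1 = d 1 + d 1 := this
    have := add_right_cancel (a := d 1) (b := d 1) (c := 0)
    simpa using (left_eq_add.mp h2)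
  ext a
  simp [unitE, Algebra.algebraMap_eq_smul_one, map_smul, hd1]

end Helpers3

theorem main_aux
    {k A B V Ω : Type*} [Field k] [Ring A] [HopfAlgebra k A]
    [Ring B] [Algebra k B] [AddCommGroup V] [Module k V]
    [Ring Ω] [Algebra k Ω]
    (ι : B →ₐ[k] Ω) (d : Ω →ₗ[k] Ω)
    (hLeib : ∀ b c : B, d (ι b * ι c) = d (ι b) * ι c + ι b * d (ι c))
    (ρL : V →ₗ[k] A ⊗[k] V)
    (hcoassoc : (TensorProduct.assoc k A A V).symm.toLinearMap ∘ₗ (ρL.lTensor A) ∘ₗ ρL =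
        ((Coalgebra.comul (R := k) (A := A)).rTensor V) ∘ₗ ρL)
    (γ γinv : A →ₗ[k] B)
    (hγ₁ : (LinearMap.mul' k B) ∘ₗ (TensorProduct.map γ γinv) ∘ₗ Coalgebra.comul =
        (Algebra.linearMap k B) ∘ₗ Coalgebra.counit)
    (hγ₂ : (LinearMap.mul' k B) ∘ₗ (TensorProduct.map γinv γ) ∘ₗ Coalgebra.comul =
        (Algebra.linearMap k B) ∘ₗ Coalgebra.counit)
    (β : A →ₗ[k] Ω) (σ : V →ₗ[k] B) :
    d ∘ₗ (ι.toLinearMap ∘ₗ ((LinearMap.mul' k B) ∘ₗ (TensorProduct.map γ σ) ∘ₗ ρL)) +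
      convAV ρL (convAA (ι.toLinearMap ∘ₗ γ) (convAA β (ι.toLinearMap ∘ₗ γinv)) +
          convAA (ι.toLinearMap ∘ₗ γ) (d ∘ₗ (ι.toLinearMap ∘ₗ γinv)))
        (ι.toLinearMap ∘ₗ ((LinearMap.mul' k B) ∘ₗ (TensorProduct.map γ σ) ∘ₗ ρL)) =
    convAV ρL (ι.toLinearMap ∘ₗ γ)
      (d ∘ₗ (ι.toLinearMap ∘ₗ σ) + convAV ρL β (ι.toLinearMap ∘ₗ σ)) := by
  set F : A →ₗ[k] Ω := ι.toLinearMap ∘ₗ γ with hF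
  set Finv : A →ₗ[k] Ω := ι.toLinearMap ∘ₗ γinv with hFinv
  set S : V →ₗ[k] Ω := ι.toLinearMap ∘ₗ σ with hS
  -- ι ∘ σγ = F *' S
  have hσγ : ι.toLinearMap ∘ₗ ((LinearMap.mul' k B) ∘ₗ (TensorProduct.map γ σ) ∘ₗ ρL)
      = convAV ρL F S := (iota_conv ι ρL γ σ).symm
  -- ι ∘ (unit of B) = unit of Ω
  have hunit : ι.toLinearMap ∘ₗ ((Algebra.linearMap k B) ∘ₗ (Coalgebra.counit (R := k) (A := A)))
      = unitE k A Ω := by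
    ext a; simp [unitE]
  -- F * Finv = 1, Finv * F = 1
  have hFFinv : convAA F Finv = unitE k A Ω := by
    rw [hF, hFinv, convAA_eq_convAV, iota_conv ι Coalgebra.comul γ γinv, hγ₁, hunit]
  have hFinvF : convAA Finv F = unitE k A Ω := by
    rw [hF, hFinv, convAA_eq_convAV, iota_conv ι Coalgebra.comul γinv γ, hγ₂, hunit]
  -- Leibniz on Finv * F = 1
  have hdFinvF : convAA (d ∘ₗ Finv) F = -convAA Finv (d ∘ₗ F) := by
    have h1 := leibniz_conv ι d hLeib Coalgebra.comul γinv γ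
    have h2 : d ∘ₗ convAA Finv F = convAA (d ∘ₗ Finv) F + convAA Finv (d ∘ₗ F) := by
      simpa [hF, hFinv, convAA_eq_convAV, LinearMap.comp_assoc] using h1
    rw [hFinvF, d_unitE ι d hLeib] at h2
    exact eq_neg_of_add_eq_zero_left h2.symm
  -- βγ * F = F * β - d∘F
  have hβγF : convAA (convAA F (convAA β Finv) + convAA F (d ∘ₗ Finv)) F
      = convAA F β + (-(d ∘ₗ F)) := by
    rw [convAA_add_left]
    have t1 : convAA (convAA F (convAA β Finv)) F = convAA F β := by
      rw [← convAA_assoc, ← convAA_assoc, hFinvF, convAA_mul_one]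
    have t2 : convAA (convAA F (d ∘ₗ Finv)) F = -(d ∘ₗ F) := by
      rw [← convAA_assoc, hdFinvF, convAA_neg_right, convAA_assoc, hFFinv,
        convAA_one_mul]
    rw [t1, t2]
  -- Leibniz on F *' S
  have hLeibFS : d ∘ₗ convAV ρL F S = convAV ρL (d ∘ₗ F) S + convAV ρL F (d ∘ₗ S) := by
    have := leibniz_conv ι d hLeib ρL γ σ
    simpa [hF, hS, LinearMap.comp_assoc] using this
  rw [hσγ, hLeibFS, convAV_assoc ρL hcoassoc _ F S, hβγF, convAV_add_left, convAV_neg_left,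
    convAV_add_right]
  rw [← convAV_assoc ρL hcoassoc F β S]
  abel


theorem covariant_derivative_gauge_covariance
    {k A B V Ω : Type*} [Field k] [Ring A] [HopfAlgebra k A]
    [Ring B] [Algebra k B] [AddCommGroup V] [Module k V]
    [Ring Ω] [Algebra k Ω]
    (ι : B →ₐ[k] Ω) (d : Ω →ₗ[k] Ω)
    -- Leibniz rule of the first-order calculus on B
    (hLeib : ∀ b c : B, d (ι b * ι c) = d (ι b) * ι c + ι b * d (ι c))
    -- left A-comodule structure on V
    (ρL : V →ₗ[k] A ⊗[k] V)
    (hcoassoc : (TensorProduct.assoc k A A V).symm.toLinearMap ∘ₗ (ρL.lTensor A) ∘ₗ ρL =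
        ((Coalgebra.comul (R := k) (A := A)).rTensor V) ∘ₗ ρL)
    (hcounit : (TensorProduct.lid k V).toLinearMap ∘ₗ
        ((Coalgebra.counit (R := k) (A := A)).rTensor V) ∘ₗ ρL = LinearMap.id)
    -- gauge transformation γ : A → B, convolution invertible with γ(1)=1
    (γ γinv : A →ₗ[k] B)
    (hγ₁ : (LinearMap.mul' k B) ∘ₗ (TensorProduct.map γ γinv) ∘ₗ Coalgebra.comul =
        (Algebra.linearMap k B) ∘ₗ Coalgebra.counit)
    (hγ₂ : (LinearMap.mul' k B) ∘ₗ (TensorProduct.map γinv γ) ∘ₗ Coalgebra.comul =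
        (Algebra.linearMap k B) ∘ₗ Coalgebra.counit)
    (hγone : γ 1 = 1)
    -- the connection one-form β : A → Γ_B ⊆ Ω and a section σ : V → B
    (β : A →ₗ[k] Ω) (σ : V →ₗ[k] B) :
    -- β^γ = γ*β*γ⁻¹ + γ*d(γ⁻¹),  σ^γ = γ*σ,  ∇ = d + β*
    let ιγ : A →ₗ[k] Ω := ι.toLinearMap ∘ₗ γ
    let ιγinv : A →ₗ[k] Ω := ι.toLinearMap ∘ₗ γinv
    let βγ : A →ₗ[k] Ω :=
      convAA ιγ (convAA β ιγinv) + convAA ιγ (d ∘ₗ ιγinv)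
    let σγ : V →ₗ[k] B :=
      (LinearMap.mul' k B) ∘ₗ (TensorProduct.map γ σ) ∘ₗ ρL
    let nablaSigma : V →ₗ[k] Ω :=
      d ∘ₗ (ι.toLinearMap ∘ₗ σ) + convAV ρL β (ι.toLinearMap ∘ₗ σ)
    d ∘ₗ (ι.toLinearMap ∘ₗ σγ) + convAV ρL βγ (ι.toLinearMap ∘ₗ σγ) =
      convAV ρL ιγ nablaSigma := by
  intro ιγ ιγinv βγ σγ nablaSigma
  exact main_aux ι d hLeib ρL hcoassoc γ γinv hγ₁ hγ₂ β σ
end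

section
/- If Φ : A → P is a convolution-invertible intertwiner for Δ_R with Φ(1)=1, then its convolution inverse satisfies Δ_R(Φ⁻¹(a)) = Σ Φ⁻¹(a₍₂₎) ⊗ Sa₍₁₎ for all a ∈ A. -/
/- STATEMENT 13: If Φ : A → P is a convolution-invertible intertwiner for Δ_R
with Φ(1)=1, then its convolution inverse satisfies
Δ_R(Φ⁻¹(a)) = Σ Φ⁻¹(a₍₂₎) ⊗ Sa₍₁₎ for all a ∈ A. -/

open TensorProduct

set_option synthInstance.maxHeartbeats 1000000
set_option maxHeartbeats 1000000
set_option linter.unusedSectionVars false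

section ConvAux
variable {k A M : Type*} [CommSemiring k] [AddCommMonoid A] [Module k A] [Coalgebra k A]
  [Semiring M] [Algebra k M]

/-- Convolution product of linear maps from a coalgebra to an algebra. -/
noncomputable def myconv (f g : A →ₗ[k] M) : A →ₗ[k] M :=
  LinearMap.mul' k M ∘ₗ TensorProduct.map f g ∘ₗ Coalgebra.comul

lemma myconv_apply (f g : A →ₗ[k] M) {a : A} {ι : Type*} (r : Coalgebra.Repr k a ι) :
    myconv f g a = ∑ i ∈ r.index, f (r.left i) * g (r.right i) := by
  have h : Coalgebra.comul (R := k) a = ∑ i ∈ r.index, r.left i ⊗ₜ[k] r.right i := r.eq.symm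
  simp [myconv, h, map_sum]

lemma myconv_assoc (f g h : A →ₗ[k] M) :
    myconv (myconv f g) h = myconv f (myconv g h) := by
  ext a
  have r : Coalgebra.Repr k a (A × A) := Coalgebra.Repr.arbitrary k a
  have rL : ∀ i : A × A, Coalgebra.Repr k (r.left i) (A × A) :=
    fun i => Coalgebra.Repr.arbitrary k (r.left i)
  have rR : ∀ i : A × A, Coalgebra.Repr k (r.right i) (A × A) :=
    fun i => Coalgebra.Repr.arbitrary k (r.right i)
  have key := Coalgebra.sum_tmul_tmul_eq r rL rR
  set E : A ⊗[k] (A ⊗[k] A) →ₗ[k] M :=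
    LinearMap.mul' k M ∘ₗ TensorProduct.map f (LinearMap.mul' k M ∘ₗ TensorProduct.map g h)
    with hE
  have key' : E (∑ i ∈ r.index, ∑ j ∈ (rL i).index,
      (rL i).left j ⊗ₜ[k] ((rL i).right j ⊗ₜ[k] r.right i)) =
      E (∑ i ∈ r.index, ∑ j ∈ (rR i).index,
      r.left i ⊗ₜ[k] ((rR i).left j ⊗ₜ[k] (rR i).right j)) := by rw [key]
  simp only [map_sum, hE, LinearMap.coe_comp, Function.comp_apply, TensorProduct.map_tmul,
    LinearMap.mul'_apply] at key'
  rw [myconv_apply _ _ r, myconv_apply _ _ r]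
  calc ∑ i ∈ r.index, myconv f g (r.left i) * h (r.right i)
      = ∑ i ∈ r.index, ∑ j ∈ (rL i).index,
          f ((rL i).left j) * (g ((rL i).right j) * h (r.right i)) := by
        refine Finset.sum_congr rfl fun i _ => ?_
        rw [myconv_apply _ _ (rL i), Finset.sum_mul]
        exact Finset.sum_congr rfl fun j _ => mul_assoc _ _ _
    _ = ∑ i ∈ r.index, ∑ j ∈ (rR i).index,
          f (r.left i) * (g ((rR i).left j) * h ((rR i).right j)) := key'
    _ = ∑ i ∈ r.index, f (r.left i) * myconv g h (r.right i) := by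
        refine Finset.sum_congr rfl fun i _ => ?_
        rw [myconv_apply _ _ (rR i), Finset.mul_sum]

lemma myconv_unit_left (f : A →ₗ[k] M) :
    myconv ((Algebra.linearMap k M) ∘ₗ Coalgebra.counit) f = f := by
  ext a
  have r : Coalgebra.Repr k a (A × A) := Coalgebra.Repr.arbitrary k a
  have key := Coalgebra.sum_counit_tmul_eq (R := k) r
  have key' : (TensorProduct.lid k M) ((LinearMap.lTensor k f)
      (∑ i ∈ r.index, Coalgebra.counit (R := k) (r.left i) ⊗ₜ[k] r.right i)) =
      (TensorProduct.lid k M) ((LinearMap.lTensor k f) ((1 : k) ⊗ₜ[k] a)) := by rw [key]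
  simp only [map_sum, LinearMap.lTensor_tmul, lid_tmul, one_smul] at key'
  rw [myconv_apply _ _ r]
  calc ∑ i ∈ r.index, (Algebra.linearMap k M ∘ₗ Coalgebra.counit) (r.left i) * f (r.right i)
      = ∑ i ∈ r.index, Coalgebra.counit (R := k) (r.left i) • f (r.right i) := by
        refine Finset.sum_congr rfl fun i _ => ?_
        simp [Algebra.smul_def]
    _ = f a := key'

lemma myconv_unit_right (f : A →ₗ[k] M) :
    myconv f ((Algebra.linearMap k M) ∘ₗ Coalgebra.counit) = f := by
  ext a
  have r : Coalgebra.Repr k a (A × A) := Coalgebra.Repr.arbitrary k a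
  have key := Coalgebra.sum_tmul_counit_eq (R := k) r
  have key' : (TensorProduct.rid k M) ((LinearMap.rTensor k f)
      (∑ i ∈ r.index, r.left i ⊗ₜ[k] Coalgebra.counit (R := k) (r.right i))) =
      (TensorProduct.rid k M) ((LinearMap.rTensor k f) (a ⊗ₜ[k] (1 : k))) := by rw [key]
  simp only [map_sum, LinearMap.rTensor_tmul, rid_tmul, one_smul] at key'
  rw [myconv_apply _ _ r]
  calc ∑ i ∈ r.index, f (r.left i) * (Algebra.linearMap k M ∘ₗ Coalgebra.counit) (r.right i)
      = ∑ i ∈ r.index, Coalgebra.counit (R := k) (r.right i) • f (r.left i) := by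
        refine Finset.sum_congr rfl fun i _ => ?_
        simp [Algebra.smul_def, Algebra.commutes, mul_comm]
    _ = f a := key'

end ConvAux

section BtAux
variable (k : Type*) {A P : Type*} [CommSemiring k] [Ring A] [Algebra k A] [Coalgebra k A]
  [Ring P] [Algebra k P] (s : A →ₗ[k] A) (finv f : A →ₗ[k] P)

noncomputable def BtMap : (A ⊗[k] A) ⊗[k] (A ⊗[k] A) →ₗ[k] P ⊗[k] A :=
  LinearMap.mul' k (P ⊗[k] A) ∘ₗ
    TensorProduct.map ((TensorProduct.comm k A P).toLinearMap ∘ₗ TensorProduct.map s finv)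
      (f.rTensor A)

lemma BtMap_tmul (w x y z : A) :
    BtMap k s finv f ((w ⊗ₜ[k] x) ⊗ₜ[k] (y ⊗ₜ[k] z)) = (finv x * f y) ⊗ₜ[k] (s w * z) := by
  simp [BtMap, Algebra.TensorProduct.tmul_mul_tmul]

noncomputable def PsiMap : A ⊗[k] (A ⊗[k] A) →ₗ[k] P ⊗[k] A :=
  BtMap k s finv f ∘ₗ (TensorProduct.assoc k A A (A ⊗[k] A)).symm.toLinearMap ∘ₗ
    LinearMap.lTensor A (LinearMap.lTensor A (Coalgebra.comul (R := k) (A := A)))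

lemma PsiMap_tmul (x y z : A) {ι : Type*} (ρ : Coalgebra.Repr k z ι) :
    PsiMap k s finv f (x ⊗ₜ[k] (y ⊗ₜ[k] z)) =
      ∑ m ∈ ρ.index, (finv y * f (ρ.left m)) ⊗ₜ[k] (s x * ρ.right m) := by
  have hz : Coalgebra.comul (R := k) z = ∑ m ∈ ρ.index, ρ.left m ⊗ₜ[k] ρ.right m := ρ.eq.symm
  simp only [PsiMap, LinearMap.coe_comp, Function.comp_apply, LinearMap.lTensor_tmul, hz,
    tmul_sum, map_sum, LinearEquiv.coe_coe, assoc_symm_tmul]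
  exact Finset.sum_congr rfl fun m _ => BtMap_tmul k s finv f _ _ _ _

noncomputable def ThetaMap (w : A) : A ⊗[k] (A ⊗[k] A) →ₗ[k] P ⊗[k] A :=
  BtMap k s finv f ∘ₗ (TensorProduct.assoc k A A (A ⊗[k] A)).symm.toLinearMap ∘ₗ
    TensorProduct.mk k A (A ⊗[k] (A ⊗[k] A)) w

lemma ThetaMap_tmul (w x y z : A) :
    ThetaMap k s finv f w (x ⊗ₜ[k] (y ⊗ₜ[k] z)) = (finv x * f y) ⊗ₜ[k] (s w * z) := by
  simp only [ThetaMap, LinearMap.coe_comp, Function.comp_apply, mk_apply, LinearEquiv.coe_coe,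
    assoc_symm_tmul]
  exact BtMap_tmul k s finv f _ _ _ _

end BtAux

theorem coaction_of_convolution_inverse
    {k A P : Type*} [Field k] [Ring A] [HopfAlgebra k A]
    [Ring P] [Algebra k P]
    (ΔR : P →ₐ[k] P ⊗[k] A)
    (hcoassoc : (TensorProduct.assoc k P A A).toLinearMap ∘ₗ
        (ΔR.toLinearMap.rTensor A) ∘ₗ ΔR.toLinearMap =
        ((Coalgebra.comul (R := k) (A := A)).lTensor P) ∘ₗ ΔR.toLinearMap)
    (hcounit : (TensorProduct.rid k P).toLinearMap ∘ₗ
        ((Coalgebra.counit (R := k) (A := A)).lTensor P) ∘ₗ ΔR.toLinearMap =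
        LinearMap.id)
    (Φ Φinv : A →ₗ[k] P)
    (hint : ΔR.toLinearMap ∘ₗ Φ = (Φ.rTensor A) ∘ₗ Coalgebra.comul)
    (hΦone : Φ 1 = 1)
    (hΦ₁ : (LinearMap.mul' k P) ∘ₗ (TensorProduct.map Φ Φinv) ∘ₗ Coalgebra.comul =
        (Algebra.linearMap k P) ∘ₗ Coalgebra.counit)
    (hΦ₂ : (LinearMap.mul' k P) ∘ₗ (TensorProduct.map Φinv Φ) ∘ₗ Coalgebra.comul =
        (Algebra.linearMap k P) ∘ₗ Coalgebra.counit) :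
    ΔR.toLinearMap ∘ₗ Φinv =
      (TensorProduct.comm k A P).toLinearMap ∘ₗ
        (TensorProduct.map (HopfAlgebra.antipode (R := k) (A := A)) Φinv) ∘ₗ
        Coalgebra.comul := by
  set Sa : A →ₗ[k] A := HopfAlgebra.antipode (R := k) (A := A) with hSa
  set u : A →ₗ[k] P ⊗[k] A := (Algebra.linearMap k (P ⊗[k] A)) ∘ₗ Coalgebra.counit with hu
  set G : A →ₗ[k] P ⊗[k] A := (TensorProduct.comm k A P).toLinearMap ∘ₗ
        (TensorProduct.map Sa Φinv) ∘ₗ Coalgebra.comul with hG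
  have claim1 : myconv (ΔR.toLinearMap ∘ₗ Φ) (ΔR.toLinearMap ∘ₗ Φinv) = u := by
    ext a
    have r : Coalgebra.Repr k a (A × A) := Coalgebra.Repr.arbitrary k a
    rw [myconv_apply _ _ r]
    have h1 : ∑ i ∈ r.index, Φ (r.left i) * Φinv (r.right i) =
        algebraMap k P (Coalgebra.counit (R := k) a) := by
      have h2 := LinearMap.congr_fun hΦ₁ a
      have h : Coalgebra.comul (R := k) a = ∑ i ∈ r.index, r.left i ⊗ₜ[k] r.right i := r.eq.symm
      simpa [h, map_sum] using h2
    calc ∑ i ∈ r.index,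
          (ΔR.toLinearMap ∘ₗ Φ) (r.left i) * (ΔR.toLinearMap ∘ₗ Φinv) (r.right i)
        = ΔR (∑ i ∈ r.index, Φ (r.left i) * Φinv (r.right i)) := by
          simp [map_sum]
      _ = u a := by rw [h1]; simp [hu]
  have claim2 : myconv G (ΔR.toLinearMap ∘ₗ Φ) = u := by
    ext a
    have r : Coalgebra.Repr k a (A × A) := Coalgebra.Repr.arbitrary k a
    have rL : ∀ i : A × A, Coalgebra.Repr k (r.left i) (A × A) :=
      fun i => Coalgebra.Repr.arbitrary k (r.left i)
    have rR : ∀ i : A × A, Coalgebra.Repr k (r.right i) (A × A) :=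
      fun i => Coalgebra.Repr.arbitrary k (r.right i)
    have rRL : ∀ i (j : A × A), Coalgebra.Repr k ((rR i).left j) (A × A) :=
      fun i j => Coalgebra.Repr.arbitrary k ((rR i).left j)
    have rRR : ∀ i (j : A × A), Coalgebra.Repr k ((rR i).right j) (A × A) :=
      fun i j => Coalgebra.Repr.arbitrary k ((rR i).right j)
    -- expansion of G on left legs
    have hGa : ∀ i, G (r.left i) =
        ∑ j ∈ (rL i).index, Φinv ((rL i).right j) ⊗ₜ[k] Sa ((rL i).left j) := by
      intro i
      have h : Coalgebra.comul (R := k) (r.left i) =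
          ∑ j ∈ (rL i).index, (rL i).left j ⊗ₜ[k] (rL i).right j := (rL i).eq.symm
      simp [hG, h, map_sum]
    -- expansion of ΔR ∘ Φ on right legs
    have hha : ∀ i, ΔR (Φ (r.right i)) =
        ∑ m ∈ (rR i).index, Φ ((rR i).left m) ⊗ₜ[k] (rR i).right m := by
      intro i
      have h2 := LinearMap.congr_fun hint (r.right i)
      have h : Coalgebra.comul (R := k) (r.right i) =
          ∑ m ∈ (rR i).index, (rR i).left m ⊗ₜ[k] (rR i).right m := (rR i).eq.symm
      simpa [h, map_sum] using h2
    -- collapse of the middle pair via hΦ₂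
    have hcol : ∀ i (j : A × A),
        ∑ m ∈ (rRL i j).index, Φinv ((rRL i j).left m) * Φ ((rRL i j).right m) =
          algebraMap k P (Coalgebra.counit (R := k) ((rR i).left j)) := by
      intro i j
      have h2 := LinearMap.congr_fun hΦ₂ ((rR i).left j)
      have h : Coalgebra.comul (R := k) ((rR i).left j) =
          ∑ m ∈ (rRL i j).index, (rRL i j).left m ⊗ₜ[k] (rRL i j).right m := (rRL i j).eq.symm
      simpa [h, map_sum] using h2
    -- counit collapse
    have h5 : ∀ i, ∑ j ∈ (rR i).index,
        Coalgebra.counit (R := k) ((rR i).left j) • (rR i).right j = r.right i := by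
      intro i
      have hk := congrArg (TensorProduct.lid k A) (Coalgebra.sum_counit_tmul_eq (R := k) (rR i))
      simp only [map_sum, lid_tmul, one_smul] at hk
      exact hk
    -- antipode identity
    have h6 : ∑ i ∈ r.index, Sa (r.left i) * r.right i =
        algebraMap k A (Coalgebra.counit (R := k) a) := by
      have h2 := HopfAlgebra.mul_antipode_rTensor_comul_apply (R := k) a
      have h : Coalgebra.comul (R := k) a = ∑ i ∈ r.index, r.left i ⊗ₜ[k] r.right i := r.eq.symm
      simpa [h, map_sum, hSa] using h2
    rw [myconv_apply _ _ r]
    calc ∑ i ∈ r.index, G (r.left i) * (ΔR.toLinearMap ∘ₗ Φ) (r.right i)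
        = ∑ i ∈ r.index, ∑ j ∈ (rL i).index, ∑ m ∈ (rR i).index,
            (Φinv ((rL i).right j) * Φ ((rR i).left m)) ⊗ₜ[k]
              (Sa ((rL i).left j) * (rR i).right m) := by
          refine Finset.sum_congr rfl fun i _ => ?_
          rw [show (ΔR.toLinearMap ∘ₗ Φ) (r.right i) = ΔR (Φ (r.right i)) from rfl,
            hGa i, hha i, Finset.sum_mul_sum]
          exact Finset.sum_congr rfl fun j _ => Finset.sum_congr rfl fun m _ => by
            rw [Algebra.TensorProduct.tmul_mul_tmul]
      _ = ∑ i ∈ r.index, ∑ j ∈ (rL i).index,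
            PsiMap k Sa Φinv Φ ((rL i).left j ⊗ₜ[k] ((rL i).right j ⊗ₜ[k] r.right i)) := by
          refine Finset.sum_congr rfl fun i _ => Finset.sum_congr rfl fun j _ => ?_
          rw [PsiMap_tmul k Sa Φinv Φ _ _ _ (rR i)]
      _ = ∑ i ∈ r.index, ∑ j ∈ (rR i).index,
            PsiMap k Sa Φinv Φ (r.left i ⊗ₜ[k] ((rR i).left j ⊗ₜ[k] (rR i).right j)) := by
          have key := Coalgebra.sum_tmul_tmul_eq r rL rR
          have := congrArg (PsiMap k Sa Φinv Φ) key
          simpa [map_sum] using this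
      _ = ∑ i ∈ r.index, ∑ j ∈ (rR i).index, ∑ m ∈ (rRR i j).index,
            (Φinv ((rR i).left j) * Φ ((rRR i j).left m)) ⊗ₜ[k]
              (Sa (r.left i) * (rRR i j).right m) := by
          refine Finset.sum_congr rfl fun i _ => Finset.sum_congr rfl fun j _ => ?_
          rw [PsiMap_tmul k Sa Φinv Φ _ _ _ (rRR i j)]
      _ = ∑ i ∈ r.index, ∑ j ∈ (rR i).index, ∑ m ∈ (rRR i j).index,
            ThetaMap k Sa Φinv Φ (r.left i)
              ((rR i).left j ⊗ₜ[k] ((rRR i j).left m ⊗ₜ[k] (rRR i j).right m)) := by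
          refine Finset.sum_congr rfl fun i _ => Finset.sum_congr rfl fun j _ =>
            Finset.sum_congr rfl fun m _ => ?_
          rw [ThetaMap_tmul]
      _ = ∑ i ∈ r.index, ∑ j ∈ (rR i).index, ∑ m ∈ (rRL i j).index,
            ThetaMap k Sa Φinv Φ (r.left i)
              ((rRL i j).left m ⊗ₜ[k] ((rRL i j).right m ⊗ₜ[k] (rR i).right j)) := by
          refine Finset.sum_congr rfl fun i _ => ?_
          have key2 := Coalgebra.sum_tmul_tmul_eq (rR i) (rRL i) (rRR i)
          have := congrArg (ThetaMap k Sa Φinv Φ (r.left i)) key2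
          simpa [map_sum] using this.symm
      _ = ∑ i ∈ r.index, ∑ j ∈ (rR i).index,
            algebraMap k P (Coalgebra.counit (R := k) ((rR i).left j)) ⊗ₜ[k]
              (Sa (r.left i) * (rR i).right j) := by
          refine Finset.sum_congr rfl fun i _ => Finset.sum_congr rfl fun j _ => ?_
          rw [← hcol i j, sum_tmul]
          exact Finset.sum_congr rfl fun m _ => ThetaMap_tmul k Sa Φinv Φ _ _ _ _
      _ = ∑ i ∈ r.index, (1 : P) ⊗ₜ[k] (Sa (r.left i) * r.right i) := by
          refine Finset.sum_congr rfl fun i _ => ?_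
          calc ∑ j ∈ (rR i).index,
                algebraMap k P (Coalgebra.counit (R := k) ((rR i).left j)) ⊗ₜ[k]
                  (Sa (r.left i) * (rR i).right j)
              = ∑ j ∈ (rR i).index, (1 : P) ⊗ₜ[k]
                  (Sa (r.left i) * (Coalgebra.counit (R := k) ((rR i).left j) • (rR i).right j)) := by
                refine Finset.sum_congr rfl fun j _ => ?_
                rw [mul_smul_comm, tmul_smul, Algebra.algebraMap_eq_smul_one, smul_tmul']
            _ = (1 : P) ⊗ₜ[k] (Sa (r.left i) *
                  ∑ j ∈ (rR i).index, Coalgebra.counit (R := k) ((rR i).left j) • (rR i).right j) := by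
                rw [Finset.mul_sum, tmul_sum]
            _ = (1 : P) ⊗ₜ[k] (Sa (r.left i) * r.right i) := by rw [h5 i]
      _ = (1 : P) ⊗ₜ[k] (algebraMap k A (Coalgebra.counit (R := k) a)) := by
          rw [← tmul_sum, h6]
      _ = u a := by
          have h7 : (1 : P) ⊗ₜ[k] (algebraMap k A (Coalgebra.counit (R := k) a)) =
              algebraMap k (P ⊗[k] A) (Coalgebra.counit (R := k) a) := by
            rw [← Algebra.TensorProduct.includeRight_apply]
            exact Algebra.TensorProduct.includeRight.commutes _
          rw [hu]
          simpa using h7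
  have final : G = ΔR.toLinearMap ∘ₗ Φinv := by
    calc G = myconv G u := (myconv_unit_right G).symm
      _ = myconv G (myconv (ΔR.toLinearMap ∘ₗ Φ) (ΔR.toLinearMap ∘ₗ Φinv)) := by rw [claim1]
      _ = myconv (myconv G (ΔR.toLinearMap ∘ₗ Φ)) (ΔR.toLinearMap ∘ₗ Φinv) :=
          (myconv_assoc _ _ _).symm
      _ = myconv u (ΔR.toLinearMap ∘ₗ Φinv) := by rw [claim2]
      _ = ΔR.toLinearMap ∘ₗ Φinv := myconv_unit_left _
  exact final.symm
end
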